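/- For 0 < β ≤ 1, the Marčenko–Pastur density f(x) = √((x−a)⁺(b−x)⁺)/(2πx) with a = (1−√β)², b = (1+√β)² integrates to β over (0,∞); hence adding the atom (1−β)·δ₀ gives a probability distribution. -/

import Mathlib

open Real MeasureTheory Set intervalIntegral

noncomputable def mpF (a b x : ℝ) : ℝ :=
  Real.sqrt ((x - a) * (b - x))
    + (a + b) / 2 * Real.arcsin ((2 * x - (a + b)) / (b - a))
    - Real.sqrt (a * b) * Real.arcsin (((a + b) * x - 2 * (a * b)) / ((b - a) * x))

theorem mpA (a b : ℝ) (ha : 0 < a) (hab : a < b) :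
    ∫ x in a..b, Real.sqrt ((x - a) * (b - x)) / x
      = Real.pi * ((a + b) / 2 - Real.sqrt (a * b)) := by
  have hba : (0:ℝ) < b - a := by linarith
  have hb0 : (0:ℝ) < b := lt_trans ha hab
  -- continuity
  have hcont : ContinuousOn (mpF a b) (Icc a b) := by
    unfold mpF
    apply ContinuousOn.sub
    · apply ContinuousOn.add
      · exact ((continuous_sqrt.comp (by continuity)).continuousOn)
      · exact (continuousOn_const.mul (Real.continuous_arcsin.comp_continuousOn
          (ContinuousOn.div (by fun_prop) continuousOn_const (fun x _ => ne_of_gt hba))))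
    · refine continuousOn_const.mul (Real.continuous_arcsin.comp_continuousOn
        (ContinuousOn.div (by fun_prop) (by fun_prop) ?_))
      intro x hx
      have : 0 < x := lt_of_lt_of_le ha hx.1
      positivity
  -- derivative
  have hderiv : ∀ x ∈ Ioo a b, HasDerivAt (mpF a b) (Real.sqrt ((x - a) * (b - x)) / x) x := by
    intro x hx
    obtain ⟨hxa, hxb⟩ := hx
    have hx0 : 0 < x := lt_trans ha hxa
    have hP : 0 < (x - a) * (b - x) := mul_pos (by linarith) (by linarith)
    obtain ⟨S, hS⟩ : ∃ s, Real.sqrt ((x - a) * (b - x)) = s := ⟨_, rfl⟩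
    have hSpos : 0 < S := hS ▸ Real.sqrt_pos.mpr hP
    have hS2 : S ^ 2 = (x - a) * (b - x) := by rw [← hS]; exact Real.sq_sqrt hP.le
    obtain ⟨T, hT⟩ : ∃ t, Real.sqrt (a * b) = t := ⟨_, rfl⟩
    have hTpos : 0 < T := hT ▸ Real.sqrt_pos.mpr (by positivity)
    have hT2 : T ^ 2 = a * b := by rw [← hT]; exact Real.sq_sqrt (by positivity)
    rw [hS]
    -- term 1
    have h1 : HasDerivAt (fun x => Real.sqrt ((x - a) * (b - x)))
        ((a + b - 2 * x) / (2 * S)) x := by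
      have hp : HasDerivAt (fun x => (x - a) * (b - x)) (a + b - 2 * x) x := by
        have := ((hasDerivAt_id x).sub_const a).mul ((hasDerivAt_const x b).sub (hasDerivAt_id x))
        refine this.congr_deriv (Eq.symm ?_)
        simp
        ring
      have := hp.sqrt (ne_of_gt hP)
      rw [hS] at this
      exact this
    -- term 2
    have hu1 : (2 * x - (a + b)) / (b - a) ≠ -1 := by
      rw [Ne, div_eq_iff (ne_of_gt hba)]; intro h; nlinarith
    have hu2 : (2 * x - (a + b)) / (b - a) ≠ 1 := by
      rw [Ne, div_eq_iff (ne_of_gt hba)]; intro h; nlinarith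
    have hru : Real.sqrt (1 - ((2 * x - (a + b)) / (b - a)) ^ 2) = 2 * S / (b - a) := by
      have he : 1 - ((2 * x - (a + b)) / (b - a)) ^ 2 = (2 * S / (b - a)) ^ 2 := by
        field_simp
        nlinarith [hS2]
      rw [he, Real.sqrt_sq (by positivity)]
    have h2 : HasDerivAt (fun x => (a + b) / 2 * Real.arcsin ((2 * x - (a + b)) / (b - a)))
        ((a + b) / (2 * S)) x := by
      have hu : HasDerivAt (fun x : ℝ => (2 * x - (a + b)) / (b - a)) (2 / (b - a)) x := by
        have := (((hasDerivAt_id x).const_mul 2).sub_const (a + b)).div_const (b - a)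
        simpa using this
      have hd := ((Real.hasDerivAt_arcsin hu1 hu2).comp x hu).const_mul ((a + b) / 2)
      rw [hru] at hd
      refine hd.congr_deriv (Eq.symm ?_)
      field_simp
    -- term 3
    have hvden : (b - a) * x ≠ 0 := by positivity
    have hv1 : ((a + b) * x - 2 * (a * b)) / ((b - a) * x) ≠ -1 := by
      rw [Ne, div_eq_iff hvden]; intro h; nlinarith
    have hv2 : ((a + b) * x - 2 * (a * b)) / ((b - a) * x) ≠ 1 := by
      rw [Ne, div_eq_iff hvden]; intro h; nlinarith
    have hrv : Real.sqrt (1 - (((a + b) * x - 2 * (a * b)) / ((b - a) * x)) ^ 2)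
        = 2 * T * S / ((b - a) * x) := by
      have he : 1 - (((a + b) * x - 2 * (a * b)) / ((b - a) * x)) ^ 2
          = (2 * T * S / ((b - a) * x)) ^ 2 := by
        field_simp
        nlinarith [hS2, hT2]
      rw [he, Real.sqrt_sq (by positivity)]
    have h3 : HasDerivAt
        (fun x => Real.sqrt (a * b) * Real.arcsin (((a + b) * x - 2 * (a * b)) / ((b - a) * x)))
        (a * b / (x * S)) x := by
      have hv : HasDerivAt (fun x : ℝ => ((a + b) * x - 2 * (a * b)) / ((b - a) * x))
          (2 * (a * b) / ((b - a) * x ^ 2)) x := by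
        have hnum : HasDerivAt (fun x : ℝ => (a + b) * x - 2 * (a * b)) (a + b) x := by
          simpa using ((hasDerivAt_id x).const_mul (a + b)).sub_const (2 * (a * b))
        have hden : HasDerivAt (fun x : ℝ => (b - a) * x) (b - a) x := by
          simpa using (hasDerivAt_id x).const_mul (b - a)
        have hq := hnum.div hden hvden
        refine hq.congr_deriv (Eq.symm ?_)
        field_simp
        ring
      have hd := ((Real.hasDerivAt_arcsin hv1 hv2).comp x hv).const_mul (Real.sqrt (a * b))
      rw [hrv] at hd
      simp only [Function.comp] at hd
      refine hd.congr_deriv (Eq.symm ?_)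
      rw [hT]
      field_simp
    have hsum := (h1.add h2).sub h3
    have : HasDerivAt (mpF a b)
        ((a + b - 2 * x) / (2 * S) + (a + b) / (2 * S) - a * b / (x * S)) x := by
      unfold mpF
      exact hsum
    convert this using 1
    field_simp
    linear_combination 2 * hS2
  have hint : IntervalIntegrable (fun x => Real.sqrt ((x - a) * (b - x)) / x) volume a b := by
    apply ContinuousOn.intervalIntegrable
    apply ContinuousOn.div ((continuous_sqrt.comp (by continuity)).continuousOn) continuousOn_id
    intro x hx
    rw [uIcc_of_le hab.le] at hx
    exact ne_of_gt (lt_of_lt_of_le ha hx.1)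
  rw [integral_eq_sub_of_hasDeriv_right_of_le hab.le hcont
    (fun x hx => (hderiv x hx).hasDerivWithinAt) hint]
  have hsa : Real.sqrt ((a - a) * (b - a)) = 0 := by simp
  have hsb : Real.sqrt ((b - a) * (b - b)) = 0 := by simp
  have hua : (2 * a - (a + b)) / (b - a) = -1 := by
    rw [div_eq_iff (by positivity)]; ring
  have hub : (2 * b - (a + b)) / (b - a) = 1 := by
    rw [div_eq_iff (by positivity)]; ring
  have hva : ((a + b) * a - 2 * (a * b)) / ((b - a) * a) = -1 := by
    rw [div_eq_iff (by positivity)]; ring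
  have hvb : ((a + b) * b - 2 * (a * b)) / ((b - a) * b) = 1 := by
    rw [div_eq_iff (by positivity)]; ring
  unfold mpF
  rw [hsa, hsb, hua, hub, hva, hvb, Real.arcsin_one, Real.arcsin_neg_one]
  ring

noncomputable def mpG (b x : ℝ) : ℝ :=
  Real.sqrt (x * (b - x)) + b / 2 * Real.arcsin ((2 * x - b) / b)

theorem mpB (b : ℝ) (hb : 0 < b) :
    ∫ x in (0:ℝ)..b, Real.sqrt (x * (b - x)) / x = Real.pi * (b / 2) := by
  have hcont : ContinuousOn (mpG b) (Icc 0 b) := by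
    unfold mpG
    apply ContinuousOn.add
    · exact (continuous_sqrt.comp (by continuity)).continuousOn
    · exact continuousOn_const.mul (Real.continuous_arcsin.comp_continuousOn
        (ContinuousOn.div (by fun_prop) continuousOn_const (fun x _ => ne_of_gt hb)))
  have hderiv : ∀ x ∈ Ioo 0 b, HasDerivAt (mpG b) (Real.sqrt (x * (b - x)) / x) x := by
    intro x hx
    obtain ⟨hx0, hxb⟩ := hx
    have hP : 0 < x * (b - x) := mul_pos hx0 (by linarith)
    obtain ⟨S, hS⟩ : ∃ s, Real.sqrt (x * (b - x)) = s := ⟨_, rfl⟩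
    have hSpos : 0 < S := hS ▸ Real.sqrt_pos.mpr hP
    have hS2 : S ^ 2 = x * (b - x) := by rw [← hS]; exact Real.sq_sqrt hP.le
    rw [hS]
    have h1 : HasDerivAt (fun x => Real.sqrt (x * (b - x))) ((b - 2 * x) / (2 * S)) x := by
      have hp : HasDerivAt (fun x => x * (b - x)) (b - 2 * x) x := by
        have := (hasDerivAt_id x).mul ((hasDerivAt_const x b).sub (hasDerivAt_id x))
        refine this.congr_deriv (Eq.symm ?_)
        simp
        ring
      have := hp.sqrt (ne_of_gt hP)
      rw [hS] at this
      exact this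
    have hu1 : (2 * x - b) / b ≠ -1 := by
      rw [Ne, div_eq_iff (ne_of_gt hb)]; intro h; nlinarith
    have hu2 : (2 * x - b) / b ≠ 1 := by
      rw [Ne, div_eq_iff (ne_of_gt hb)]; intro h; nlinarith
    have hru : Real.sqrt (1 - ((2 * x - b) / b) ^ 2) = 2 * S / b := by
      have he : 1 - ((2 * x - b) / b) ^ 2 = (2 * S / b) ^ 2 := by
        field_simp
        nlinarith [hS2]
      rw [he, Real.sqrt_sq (by positivity)]
    have h2 : HasDerivAt (fun x => b / 2 * Real.arcsin ((2 * x - b) / b)) (b / (2 * S)) x := by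
      have hu : HasDerivAt (fun x : ℝ => (2 * x - b) / b) (2 / b) x := by
        simpa using (((hasDerivAt_id x).const_mul 2).sub_const b).div_const b
      have hd := ((Real.hasDerivAt_arcsin hu1 hu2).comp x hu).const_mul (b / 2)
      rw [hru] at hd
      refine hd.congr_deriv (Eq.symm ?_)
      field_simp
    have hsum := h1.add h2
    have : HasDerivAt (mpG b) ((b - 2 * x) / (2 * S) + b / (2 * S)) x := by
      unfold mpG
      exact hsum
    convert this using 1
    field_simp
    linear_combination 2 * hS2
  have hint : IntervalIntegrable (fun x => Real.sqrt (x * (b - x)) / x) volume 0 b := by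
    rw [intervalIntegrable_iff_integrableOn_Ioc_of_le hb.le]
    have hmaj : IntegrableOn (fun x : ℝ => Real.sqrt b * x ^ (-(1:ℝ)/2)) (Ioc 0 b) := by
      have := (intervalIntegral.intervalIntegrable_rpow' (a := 0) (b := b)
        (r := -(1:ℝ)/2) (by norm_num)).const_mul (Real.sqrt b)
      rw [intervalIntegrable_iff_integrableOn_Ioc_of_le hb.le] at this
      exact this
    refine hmaj.integrable.mono ?_ ?_
    · apply Measurable.aestronglyMeasurable
      exact ((continuous_sqrt.comp (by continuity)).measurable.div measurable_id)
    · rw [ae_restrict_iff' measurableSet_Ioc]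
      filter_upwards with x hx
      obtain ⟨hx0, hxb⟩ := hx
      have hb' : b - x < b := by linarith
      rw [Real.norm_eq_abs, Real.norm_eq_abs]
      rw [abs_of_nonneg (by positivity), abs_of_nonneg (by positivity)]
      have h1 : Real.sqrt (x * (b - x)) ≤ Real.sqrt (x * b) := by
        apply Real.sqrt_le_sqrt
        nlinarith
      have hx12 : x ^ (-(1:ℝ)/2) = 1 / Real.sqrt x := by
        rw [neg_div, Real.rpow_neg hx0.le, ← Real.sqrt_eq_rpow, one_div]
      calc Real.sqrt (x * (b - x)) / x ≤ Real.sqrt (x * b) / x := by gcongr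
        _ = Real.sqrt b * x ^ (-(1:ℝ)/2) := by
            have hxx : Real.sqrt x * Real.sqrt x = x := Real.mul_self_sqrt hx0.le
            have hsx : Real.sqrt x ≠ 0 := by positivity
            rw [hx12, Real.sqrt_mul hx0.le]
            field_simp
            linear_combination hxx
  rw [integral_eq_sub_of_hasDeriv_right_of_le hb.le hcont
    (fun x hx => (hderiv x hx).hasDerivWithinAt) hint]
  have hsa : Real.sqrt ((0:ℝ) * (b - 0)) = 0 := by simp
  have hsb : Real.sqrt (b * (b - b)) = 0 := by simp
  have hua : (2 * 0 - b) / b = -1 := by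
    rw [div_eq_iff (ne_of_gt hb)]; ring
  have hub : (2 * b - b) / b = 1 := by
    rw [div_eq_iff (ne_of_gt hb)]; ring
  unfold mpG
  rw [hsa, hsb, hua, hub, Real.arcsin_one, Real.arcsin_neg_one]
  ring

theorem mp_density_integrates_to_beta (β : ℝ) (hβ0 : 0 < β) (hβ1 : β ≤ 1)
    (a b : ℝ) (ha : a = (1 - Real.sqrt β)^2) (hb : b = (1 + Real.sqrt β)^2)
    (f : ℝ → ℝ)
    (hf : ∀ x, f x = if a ≤ x ∧ x ≤ b then Real.sqrt ((x - a) * (b - x)) / (2 * Real.pi * x) else 0) :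
    ∫ x in Set.Ioi (0:ℝ), f x = β := by
  set s := Real.sqrt β with hsdef
  have hs0 : 0 < s := Real.sqrt_pos.mpr hβ0
  have hs1 : s ≤ 1 := by
    rw [hsdef, show (1:ℝ) = Real.sqrt 1 by simp]
    exact Real.sqrt_le_sqrt hβ1
  have hs2 : s ^ 2 = β := Real.sq_sqrt hβ0.le
  have ha0 : 0 ≤ a := ha ▸ sq_nonneg _
  have hab : a < b := by rw [ha, hb]; nlinarith
  have hb0 : 0 < b := by rw [hb]; nlinarith
  -- vanishing outside Ioc a b
  have hvanish : ∀ x, x ∉ Ioc a b → f x = 0 := by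
    intro x hx
    rw [hf]
    split_ifs with h
    · obtain ⟨h1, h2⟩ := h
      have hxa : x = a := le_antisymm (le_of_not_gt (fun hlt => hx ⟨hlt, h2⟩)) h1
      rw [hxa, sub_self, zero_mul, Real.sqrt_zero, zero_div]
    · rfl
  have hvanish0 : ∀ x, x ∉ Ioi (0:ℝ) → f x = 0 := by
    intro x hx
    simp only [mem_Ioi, not_lt] at hx
    apply hvanish
    intro hmem
    exact absurd (lt_of_le_of_lt ha0 hmem.1) (not_lt.mpr hx)
  have step1 : ∫ x in Ioi (0:ℝ), f x = ∫ x in a..b, f x := by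
    rw [setIntegral_eq_integral_of_forall_compl_eq_zero hvanish0,
      ← setIntegral_eq_integral_of_forall_compl_eq_zero hvanish,
      intervalIntegral.integral_of_le hab.le]
  have step2 : ∫ x in a..b, f x
      = ∫ x in a..b, (1 / (2 * Real.pi)) * (Real.sqrt ((x - a) * (b - x)) / x) := by
    apply intervalIntegral.integral_congr
    intro x hx
    rw [uIcc_of_le hab.le] at hx
    rw [hf, if_pos ⟨hx.1, hx.2⟩]
    ring
  rw [step1, step2, intervalIntegral.integral_const_mul]
  rcases eq_or_lt_of_le hβ1 with hβeq | hβlt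
  · -- β = 1
    have hs : s = 1 := by rw [hsdef, hβeq, Real.sqrt_one]
    have ha' : a = 0 := by rw [ha, hs]; ring
    have hb' : b = 4 := by rw [hb, hs]; norm_num
    subst ha' hb'
    simp only [sub_zero]
    rw [mpB 4 (by norm_num), hβeq]
    field_simp
    ring
  · -- β < 1
    have hs1' : s < 1 := by
      rw [hsdef, show (1:ℝ) = Real.sqrt 1 by simp]
      exact Real.sqrt_lt_sqrt hβ0.le hβlt
    have ha' : 0 < a := by rw [ha]; nlinarith
    rw [mpA a b ha' hab]
    have hab2 : a + b = 2 + 2 * β := by rw [ha, hb]; linear_combination 2 * hs2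
    have habm : a * b = (1 - β) ^ 2 := by
      rw [ha, hb]; linear_combination (s^2 + β - 2) * hs2
    have hsab : Real.sqrt (a * b) = 1 - β := by
      rw [habm, Real.sqrt_sq (by linarith)]
    rw [hab2, hsab]
    field_simp
    ring
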